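/- Let n ≥ 1 and let Ω be a continuous function on C^n∖{0}, homogeneous of degree 0, bounded, and with mean zero on the unit sphere: ∫_{S^{2n−1}} Ω dσ = 0. Define K(z,t) = Ω(z) |z|^{−2n} (|z|² + it)^{−1} for z ≠ 0. Then there is a constant C depending only on n and sup|Ω| such that for every t ≠ 0, every δ > 0 and every C¹ function φ₂ : C^n → ℂ supported in the closed unit ball with |φ₂| ≤ 1 and |∇φ₂| ≤ 1: the principal value lim_{ε→0⁺} ∫_{{|z|>ε}} K(z,t) φ₂(δz) dz exists and its modulus is at most C |t|^{−1}; equivalently, the integral ∫_{C^n} K(z,t)(φ₂(δz) − φ₂(0)) χ_{{|z| ≤ 1/δ}}(z) dz converges absolutely and is bounded in modulus by C |t|^{−1}. -/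

import Mathlib

open MeasureTheory Complex
open scoped ENNReal

noncomputable section

/-- The squared Euclidean norm `|z|²` of `z ∈ ℂⁿ`. -/
def eSq {n : ℕ} (z : Fin n → ℂ) : ℝ := ∑ k : Fin n, Complex.normSq (z k)

/-- The Euclidean norm `|z|` of `z ∈ ℂⁿ`. -/
def zNorm {n : ℕ} (z : Fin n → ℂ) : ℝ := Real.sqrt (eSq z)

/-- The identification `ℝ^{2n} ≅ ℂⁿ`. -/
def toC (n : ℕ) (x : EuclideanSpace ℝ (Fin (n + n))) : Fin n → ℂ :=
  fun k => ((x (Fin.castAdd n k) : ℝ) : ℂ) + ((x (Fin.natAdd n k) : ℝ) : ℂ) * Complex.I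

/-- The mixed kernel `K(z,t) = Ω(z) |z|^{-2n} (|z|² + it)⁻¹`. -/
def mixedK (n : ℕ) (Ω : (Fin n → ℂ) → ℂ) (z : Fin n → ℂ) (t : ℝ) : ℂ :=
  Ω z * (((zNorm z ^ (2*n) : ℝ) : ℂ))⁻¹ * (((eSq z : ℝ) : ℂ) + (t : ℂ) * Complex.I)⁻¹

section Aux

variable {n : ℕ}

local notation "Esp" => EuclideanSpace ℝ (Fin (n + n))

lemma eSq_nonneg (z : Fin n → ℂ) : 0 ≤ eSq z :=
  Finset.sum_nonneg fun _ _ => Complex.normSq_nonneg _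

lemma zNorm_nonneg (z : Fin n → ℂ) : 0 ≤ zNorm z := Real.sqrt_nonneg _

lemma zNorm_sq (z : Fin n → ℂ) : zNorm z ^ 2 = eSq z := Real.sq_sqrt (eSq_nonneg z)

lemma zNorm_eq_zero_iff {z : Fin n → ℂ} : zNorm z = 0 ↔ z = 0 := by
  rw [zNorm, Real.sqrt_eq_zero (eSq_nonneg z), eSq]
  constructor
  · intro h
    have := (Finset.sum_eq_zero_iff_of_nonneg (fun i _ => Complex.normSq_nonneg (z i))).1 h
    funext k
    simpa [Complex.normSq_eq_zero] using this k (Finset.mem_univ k)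
  · intro h; simp [h]

lemma eSq_smul (c : ℝ) (z : Fin n → ℂ) : eSq (c • z) = c^2 * eSq z := by
  simp only [eSq, Pi.smul_apply, Finset.mul_sum]
  refine Finset.sum_congr rfl fun k _ => ?_
  rw [show c • z k = (c : ℂ) * z k from by simp [Complex.real_smul], Complex.normSq_mul]
  simp [Complex.normSq_ofReal, sq]

lemma zNorm_smul {c : ℝ} (hc : 0 ≤ c) (z : Fin n → ℂ) : zNorm (c • z) = c * zNorm z := by
  rw [zNorm, eSq_smul, Real.sqrt_mul (sq_nonneg c), Real.sqrt_sq hc, zNorm]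

lemma norm_le_zNorm (z : Fin n → ℂ) : ‖z‖ ≤ zNorm z := by
  refine (pi_norm_le_iff_of_nonneg (zNorm_nonneg z)).2 fun k => ?_
  rw [zNorm]
  refine (Real.le_sqrt (norm_nonneg _) (eSq_nonneg z)).2 ?_
  rw [show ‖z k‖ ^ 2 = Complex.normSq (z k) from by rw [← Complex.sq_norm]]
  exact Finset.single_le_sum (fun i _ => Complex.normSq_nonneg (z i)) (Finset.mem_univ k)

lemma continuous_eSq : Continuous (eSq (n := n)) := by
  refine continuous_finset_sum _ fun k _ => Complex.continuous_normSq.comp (continuous_apply k)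

lemma continuous_zNorm : Continuous (zNorm (n := n)) :=
  Real.continuous_sqrt.comp continuous_eSq

lemma zNorm_toC (x : Esp) : zNorm (toC n x) = ‖x‖ := by
  rw [zNorm, EuclideanSpace.norm_eq]
  congr 1
  have h1 : ∑ i : Fin (n+n), ‖x i‖ ^ 2
      = ∑ k : Fin n, ‖x (Fin.castAdd n k)‖ ^ 2 + ∑ k : Fin n, ‖x (Fin.natAdd n k)‖ ^ 2 :=
    Fin.sum_univ_add _
  rw [h1, eSq, ← Finset.sum_add_distrib]
  refine Finset.sum_congr rfl fun k _ => ?_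
  simp [toC, Complex.normSq_add_mul_I, Real.norm_eq_abs, sq_abs, sq]

lemma toC_smul (c : ℝ) (x : Esp) : toC n (c • x) = c • toC n x := by
  funext k
  simp only [toC, Pi.smul_apply, Complex.real_smul]
  push_cast [PiLp.smul_apply, smul_eq_mul]
  ring

lemma toC_ne_zero {x : Esp} (hx : x ≠ 0) : toC n x ≠ 0 := by
  intro h
  apply hx
  have := zNorm_toC (n := n) x
  rw [h, zNorm_eq_zero_iff.2 rfl] at this
  exact norm_eq_zero.1 this.symm

/-- The identification as a volume-preserving measurable equivalence. -/
def cEquiv (n : ℕ) : EuclideanSpace ℝ (Fin (n + n)) ≃ᵐ (Fin n → ℂ) :=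
  (MeasurableEquiv.toLp 2 (Fin (n + n) → ℝ)).symm.trans <|
  ((MeasurableEquiv.piCongrLeft (fun _ : Fin (n + n) => ℝ) finSumFinEquiv).symm).trans <|
  (MeasurableEquiv.sumPiEquivProdPi (fun _ : Fin n ⊕ Fin n => ℝ)).trans <|
  ((MeasurableEquiv.arrowProdEquivProdArrow ℝ ℝ (Fin n)).symm).trans <|
  (MeasurableEquiv.piCongrRight (fun _ : Fin n => Complex.measurableEquivRealProd.symm))

lemma measurePreserving_cEquiv (n : ℕ) :
    MeasurePreserving (cEquiv n) (volume : Measure (EuclideanSpace ℝ (Fin (n + n))))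
      (volume : Measure (Fin n → ℂ)) := by
  have h1 := EuclideanSpace.volume_preserving_symm_measurableEquiv_toLp (Fin (n + n))
  have h2 := (MeasureTheory.volume_measurePreserving_piCongrLeft (fun _ : Fin (n + n) => ℝ)
    finSumFinEquiv).symm (MeasurableEquiv.piCongrLeft (fun _ : Fin (n + n) => ℝ) finSumFinEquiv)
  have h3 := MeasureTheory.volume_measurePreserving_sumPiEquivProdPi
    (fun _ : Fin n ⊕ Fin n => ℝ)
  have h4 := (MeasureTheory.volume_measurePreserving_arrowProdEquivProdArrow ℝ ℝ (Fin n)).symm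
    (MeasurableEquiv.arrowProdEquivProdArrow ℝ ℝ (Fin n))
  have h5 : MeasurePreserving
      (MeasurableEquiv.piCongrRight (fun _ : Fin n => Complex.measurableEquivRealProd.symm))
      (volume : Measure (Fin n → ℝ × ℝ)) (volume : Measure (Fin n → ℂ)) := by
    have := MeasureTheory.measurePreserving_pi (fun _ : Fin n => (volume : Measure (ℝ × ℝ)))
      (fun _ : Fin n => (volume : Measure ℂ))
      (fun _ => Complex.volume_preserving_equiv_real_prod.symm Complex.measurableEquivRealProd)
    exact this
  exact h5.comp (h4.comp (h3.comp (h2.comp h1)))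

lemma cEquiv_apply (n : ℕ) (x : EuclideanSpace ℝ (Fin (n + n))) :
    cEquiv n x = toC n x := by
  funext k
  show Complex.measurableEquivRealProd.symm _ = _
  rw [show Complex.measurableEquivRealProd.symm = fun p : ℝ × ℝ => Complex.mk p.1 p.2 from rfl]
  simp only [toC, Complex.mk_eq_add_mul_I]
  rfl

lemma esp_nontrivial (hn : 1 ≤ n) : Nontrivial Esp := by
  have : Nonempty (Fin (n + n)) := ⟨⟨0, by omega⟩⟩
  infer_instance

lemma esp_dim : Module.finrank ℝ Esp = n + n := by simp

/-- Transfer of lower integrals to the Euclidean model. -/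
lemma lintegral_c (f : (Fin n → ℂ) → ℝ≥0∞) :
    ∫⁻ z : Fin n → ℂ, f z = ∫⁻ x : Esp, f (toC n x) := by
  rw [← (measurePreserving_cEquiv n).lintegral_comp_emb (cEquiv n).measurableEmbedding f]
  congr 1
  funext x
  rw [cEquiv_apply]

/-- Transfer of integrals to the Euclidean model. -/
lemma integral_c (f : (Fin n → ℂ) → ℂ) :
    ∫ z : Fin n → ℂ, f z = ∫ x : Esp, f (toC n x) := by
  rw [← (measurePreserving_cEquiv n).integral_comp' f]
  congr 1
  funext x
  rw [cEquiv_apply]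

lemma volume_c_singleton_zero (hn : 1 ≤ n) : (volume : Measure (Fin n → ℂ)) {0} = 0 := by
  haveI : Nontrivial Esp := esp_nontrivial hn
  rw [← (measurePreserving_cEquiv n).measure_preimage
    (measurableSet_singleton (0 : Fin n → ℂ)).nullMeasurableSet]
  have : (cEquiv n) ⁻¹' ({0} : Set (Fin n → ℂ)) = {(cEquiv n).symm 0} := by
    ext x
    simp only [Set.mem_preimage, Set.mem_singleton_iff]
    constructor
    · intro h
      have := congrArg (cEquiv n).symm h
      simpa using this
    · intro h
      rw [h]
      simp
  rw [this]
  exact measure_singleton _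

lemma volume_zNorm_le_lt_top (hn : 1 ≤ n) (r : ℝ) :
    (volume : Measure (Fin n → ℂ)) {z : Fin n → ℂ | zNorm z ≤ r} < ⊤ := by
  have hms : MeasurableSet {z : Fin n → ℂ | zNorm z ≤ r} :=
    continuous_zNorm.measurable measurableSet_Iic
  rw [← (measurePreserving_cEquiv n).measure_preimage hms.nullMeasurableSet]
  refine lt_of_le_of_lt (measure_mono ?_) (measure_closedBall_lt_top (x := (0:Esp)) (r := r))
  intro x hx
  simp only [Set.mem_preimage, Set.mem_setOf_eq, cEquiv_apply, zNorm_toC] at hx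
  simpa [Metric.mem_closedBall, dist_zero_right] using hx

/-- Polar coordinates for lower integrals of radial functions on `ℝ^{2n}`. -/
lemma lintegral_polar (hn : 1 ≤ n) (g : ℝ → ℝ≥0∞) (hg : Measurable g) :
    ∫⁻ x : Esp, g ‖x‖
      = (volume : Measure Esp).toSphere Set.univ
        * ∫⁻ r in Set.Ioi (0:ℝ), ENNReal.ofReal (r ^ (n + n - 1)) * g r := by
  haveI : Nontrivial Esp := esp_nontrivial hn
  set μ := (volume : Measure Esp) with hμ
  have h0 : MeasurableSet ({(0:Esp)}ᶜ) := (measurableSet_singleton _).compl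
  calc ∫⁻ x : Esp, g ‖x‖ ∂μ
      = ∫⁻ x in {(0:Esp)}ᶜ, g ‖x‖ ∂μ := by rw [MeasureTheory.restrict_compl_singleton]
    _ = ∫⁻ x : ({(0:Esp)}ᶜ : Set Esp), g ‖(x : Esp)‖ ∂(μ.comap Subtype.val) :=
        (lintegral_subtype_comap h0 _).symm
    _ = ∫⁻ p : Metric.sphere (0:Esp) 1 × Set.Ioi (0:ℝ), g p.2
          ∂(μ.toSphere.prod (Measure.volumeIoiPow (Module.finrank ℝ Esp - 1))) := by
        have h := (μ.measurePreserving_homeomorphUnitSphereProd).lintegral_comp_emb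
          (Homeomorph.measurableEmbedding _) (fun p => g p.2)
        simp only [homeomorphUnitSphereProd_apply_snd_coe] at h
        exact h
    _ = μ.toSphere Set.univ * ∫⁻ r : Set.Ioi (0:ℝ), g r
          ∂(Measure.volumeIoiPow (Module.finrank ℝ Esp - 1)) := by
        have := MeasureTheory.lintegral_prod_mul (μ := μ.toSphere)
          (ν := Measure.volumeIoiPow (Module.finrank ℝ Esp - 1))
          (f := fun _ => (1:ℝ≥0∞)) (g := fun r : Set.Ioi (0:ℝ) => g r)
          aemeasurable_const (hg.comp measurable_subtype_coe).aemeasurable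
        simpa using this
    _ = μ.toSphere Set.univ * ∫⁻ r in Set.Ioi (0:ℝ), ENNReal.ofReal (r ^ (n + n - 1)) * g r := by
        congr 1
        rw [Measure.volumeIoiPow, lintegral_withDensity_eq_lintegral_mul _
          (by fun_prop)
          (show Measurable fun r : Set.Ioi (0:ℝ) => g ↑r from hg.comp measurable_subtype_coe)]
        rw [esp_dim]
        exact lintegral_subtype_comap measurableSet_Ioi
          (fun r => ENNReal.ofReal (r ^ (n + n - 1)) * g r)

/-- The mean-zero property kills integrals of `Ω(z) g(|z|)`. -/
lemma integral_vanish (hn : 1 ≤ n) (Ω : (Fin n → ℂ) → ℂ)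
    (hhom : ∀ (l : ℝ) (z : Fin n → ℂ), 0 < l → z ≠ 0 → Ω (l • z) = Ω z)
    (hmean : (∫ ω : Metric.sphere (0 : Esp) 1,
        Ω (toC n (ω : Esp)) ∂((volume : Measure Esp).toSphere)) = 0)
    (g : ℝ → ℂ) :
    ∫ z : Fin n → ℂ, Ω z * g (zNorm z) = 0 := by
  haveI : Nontrivial Esp := esp_nontrivial hn
  rw [integral_c (fun z => Ω z * g (zNorm z))]
  have hrw : ∀ x : Esp, Ω (toC n x) * g (zNorm (toC n x)) = Ω (toC n x) * g ‖x‖ := by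
    intro x; rw [zNorm_toC]
  rw [integral_congr_ae (Filter.Eventually.of_forall hrw)]
  set μ := (volume : Measure Esp) with hμ
  have h0 : MeasurableSet ({(0:Esp)}ᶜ) := (measurableSet_singleton _).compl
  have key : ∀ x : ({(0:Esp)}ᶜ : Set Esp),
      Ω (toC n (x:Esp)) * g ‖(x:Esp)‖
        = (fun p : Metric.sphere (0:Esp) 1 × Set.Ioi (0:ℝ) =>
            Ω (toC n (p.1 : Esp)) * g p.2)
            (homeomorphUnitSphereProd (EuclideanSpace ℝ (Fin (n + n))) x) := by
    intro x
    have hx : (x : Esp) ≠ 0 := x.2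
    have hnorm : (0:ℝ) < ‖(x:Esp)‖ := norm_pos_iff.2 hx
    simp only [homeomorphUnitSphereProd_apply_fst_coe, homeomorphUnitSphereProd_apply_snd_coe]
    rw [toC_smul, hhom _ _ (inv_pos.2 hnorm) (toC_ne_zero hx)]
  calc ∫ x : Esp, Ω (toC n x) * g ‖x‖ ∂μ
      = ∫ x in {(0:Esp)}ᶜ, Ω (toC n x) * g ‖x‖ ∂μ := by
        rw [MeasureTheory.restrict_compl_singleton]
    _ = ∫ x : ({(0:Esp)}ᶜ : Set Esp), Ω (toC n (x:Esp)) * g ‖(x:Esp)‖ ∂(μ.comap Subtype.val) :=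
        (integral_subtype_comap h0 _).symm
    _ = ∫ p : Metric.sphere (0:Esp) 1 × Set.Ioi (0:ℝ),
          Ω (toC n (p.1 : Esp)) * g p.2
          ∂(μ.toSphere.prod (Measure.volumeIoiPow (Module.finrank ℝ Esp - 1))) := by
        have h2 := μ.measurePreserving_homeomorphUnitSphereProd.integral_comp
          (Homeomorph.measurableEmbedding _)
          (fun p : Metric.sphere (0:Esp) 1 × Set.Ioi (0:ℝ) => Ω (toC n (p.1 : Esp)) * g p.2)
        rw [← h2]
        exact integral_congr_ae (Filter.Eventually.of_forall key)
    _ = (∫ ω : Metric.sphere (0:Esp) 1, Ω (toC n (ω:Esp)) ∂μ.toSphere)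
          * ∫ r : Set.Ioi (0:ℝ), g r ∂(Measure.volumeIoiPow (Module.finrank ℝ Esp - 1)) :=
        integral_prod_mul (fun ω : Metric.sphere (0:Esp) 1 => Ω (toC n (ω:Esp)))
          (fun r : Set.Ioi (0:ℝ) => g (r:ℝ))
    _ = 0 := by rw [hmean, zero_mul]

/-- The key radial integral computation. -/
lemma lintegral_radial (hn : 1 ≤ n) {R : ℝ} (hR : 0 < R) :
    ∫⁻ z : Fin n → ℂ,
        (Set.Iic R).indicator (fun s => ENNReal.ofReal (s * (s ^ (2*n))⁻¹)) (zNorm z)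
      = (volume : Measure Esp).toSphere Set.univ * ENNReal.ofReal R := by
  set g : ℝ → ℝ≥0∞ := (Set.Iic R).indicator (fun s => ENNReal.ofReal (s * (s ^ (2*n))⁻¹))
    with hgdef
  have hg : Measurable g := Measurable.indicator (by fun_prop) measurableSet_Iic
  rw [lintegral_c (fun z => g (zNorm z))]
  have hrw : ∀ x : Esp, g (zNorm (toC n x)) = g ‖x‖ := fun x => by rw [zNorm_toC]
  rw [lintegral_congr hrw, lintegral_polar hn g hg]
  congr 1
  have hptwise : ∀ r ∈ Set.Ioi (0:ℝ), ENNReal.ofReal (r ^ (n+n-1)) * g r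
      = (Set.Ioc (0:ℝ) R).indicator (fun _ => (1:ℝ≥0∞)) r := by
    intro r hr
    have hr0 : (0:ℝ) < r := hr
    by_cases h : r ≤ R
    · rw [hgdef, Set.indicator_of_mem (Set.mem_Iic.2 h),
        Set.indicator_of_mem (Set.mem_Ioc.2 ⟨hr0, h⟩),
        ← ENNReal.ofReal_mul (by positivity)]
      have : r ^ (n+n-1) * (r * (r ^ (2*n))⁻¹) = 1 := by
        have h1 : r ^ (n+n-1) * r = r ^ (2*n) := by
          rw [← pow_succ]
          congr 1
          omega
        rw [← mul_assoc, h1, mul_inv_cancel₀ (by positivity)]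
      rw [this]
      simp
    · rw [hgdef, Set.indicator_of_notMem (by simpa using h),
        Set.indicator_of_notMem (fun hc => h hc.2)]
      simp
  rw [setLIntegral_congr_fun measurableSet_Ioi hptwise]
  rw [lintegral_indicator measurableSet_Ioc, setLIntegral_one,
    Measure.restrict_apply measurableSet_Ioc,
    Set.inter_eq_left.2 Set.Ioc_subset_Ioi_self, Real.volume_Ioc]
  simp


lemma norm_mixedK_le {Ω : (Fin n → ℂ) → ℂ} {B : ℝ} (hB : ∀ z, ‖Ω z‖ ≤ B)
    {t : ℝ} (ht : t ≠ 0) (z : Fin n → ℂ) :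
    ‖mixedK n Ω z t‖ ≤ B * (zNorm z ^ (2*n))⁻¹ * |t|⁻¹ := by
  have h1 : ‖((((zNorm z ^ (2*n) : ℝ)) : ℂ))⁻¹‖ = (zNorm z ^ (2*n))⁻¹ := by
    rw [norm_inv, Complex.norm_real, Real.norm_eq_abs,
      _root_.abs_of_nonneg (pow_nonneg (zNorm_nonneg z) _)]
  have h2 : ‖(((eSq z : ℝ) : ℂ) + (t : ℂ) * Complex.I)⁻¹‖ ≤ |t|⁻¹ := by
    rw [norm_inv]
    have him : |t| ≤ ‖((eSq z : ℝ) : ℂ) + (t : ℂ) * Complex.I‖ := by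
      have := Complex.abs_im_le_norm (((eSq z : ℝ) : ℂ) + (t : ℂ) * Complex.I)
      simpa [Complex.add_im] using this
    exact inv_anti₀ (abs_pos.2 ht) him
  rw [mixedK, norm_mul, norm_mul, h1]
  calc ‖Ω z‖ * (zNorm z ^ (2*n))⁻¹ * ‖(((eSq z : ℝ) : ℂ) + (t : ℂ) * Complex.I)⁻¹‖
      ≤ B * (zNorm z ^ (2*n))⁻¹ * |t|⁻¹ := by
        have hB0 : 0 ≤ B := le_trans (norm_nonneg _) (hB 0)
        have hinv : (0:ℝ) ≤ (zNorm z ^ (2*n))⁻¹ := inv_nonneg.2 (pow_nonneg (zNorm_nonneg z) _)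
        exact mul_le_mul (mul_le_mul (hB z) le_rfl hinv hB0) h2 (norm_nonneg _)
          (mul_nonneg hB0 hinv)
  
lemma phi_lip {φ : (Fin n → ℂ) → ℂ} (hφ : ContDiff ℝ 1 φ)
    (hφ' : ∀ z, ‖fderiv ℝ φ z‖ ≤ 1) (a b : Fin n → ℂ) : ‖φ a - φ b‖ ≤ ‖a - b‖ := by
  have := Convex.norm_image_sub_le_of_norm_fderiv_le (f := φ) (C := 1)
    (fun x _ => (hφ.differentiable one_ne_zero).differentiableAt) (fun x _ => hφ' x)
    convex_univ (Set.mem_univ b) (Set.mem_univ a)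
  simpa using this

lemma aesm_mixedK (hn : 1 ≤ n) {Ω : (Fin n → ℂ) → ℂ}
    (hΩc : ContinuousOn Ω {z : Fin n → ℂ | z ≠ 0}) {t : ℝ} (ht : t ≠ 0) :
    AEStronglyMeasurable (fun z => mixedK n Ω z t) (volume : Measure (Fin n → ℂ)) := by
  have hset : MeasurableSet {z : Fin n → ℂ | z ≠ 0} := by
    have : {z : Fin n → ℂ | z ≠ 0} = ({0} : Set (Fin n → ℂ))ᶜ := by
      ext z; simp
    rw [this]
    exact (measurableSet_singleton _).compl
  have hres : (volume : Measure (Fin n → ℂ)).restrict {z : Fin n → ℂ | z ≠ 0} = volume := by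
    apply Measure.restrict_eq_self_of_ae_mem
    rw [Filter.eventually_iff, mem_ae_iff]
    have : {z : Fin n → ℂ | z ∈ {z : Fin n → ℂ | z ≠ 0}}ᶜ = {(0 : Fin n → ℂ)} := by
      ext z; simp
    rw [this]
    exact volume_c_singleton_zero hn
  have hΩm : AEStronglyMeasurable Ω (volume : Measure (Fin n → ℂ)) := by
    have h : AEStronglyMeasurable Ω
        ((volume : Measure (Fin n → ℂ)).restrict {z : Fin n → ℂ | z ≠ 0}) :=
      hΩc.aestronglyMeasurable hset
    rwa [hres] at h
  have hp1 : Measurable fun z : Fin n → ℂ => ((((zNorm z ^ (2*n) : ℝ)) : ℂ))⁻¹ := by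
    have heq : (fun z : Fin n → ℂ => ((((zNorm z ^ (2*n) : ℝ)) : ℂ))⁻¹)
        = fun z => ((((zNorm z ^ (2*n))⁻¹ : ℝ)) : ℂ) := by
      funext z; rw [Complex.ofReal_inv]
    rw [heq]
    exact Complex.measurable_ofReal.comp ((continuous_zNorm.measurable.pow_const _).inv)
  have hp2 : Continuous fun z : Fin n → ℂ => (((eSq z : ℝ) : ℂ) + (t : ℂ) * Complex.I)⁻¹ := by
    apply Continuous.inv₀
    · exact (Complex.continuous_ofReal.comp continuous_eSq).add continuous_const
    · intro z
      intro h
      apply ht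
      have := congrArg Complex.im h
      simpa using this
  exact (hΩm.mul hp1.aestronglyMeasurable).mul hp2.aestronglyMeasurable

end Aux

/-- **Flag cancellation of the mixed kernel in the `z` variable**: if `Ω` is continuous
away from `0`, homogeneous of degree `0`, bounded by `B` and has mean zero on the unit
sphere `S^{2n-1}`, then for `t ≠ 0`, `δ > 0` and every normalized `C¹` bump function
`φ₂` on `ℂⁿ`, the principal value `lim_{ε→0⁺} ∫_{|z|>ε} K(z,t) φ₂(δz) dz` exists with
modulus `≤ C|t|⁻¹`; equivalently `∫ K(z,t)(φ₂(δz)-φ₂(0)) χ_{|z|≤1/δ} dz` converges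
absolutely with modulus `≤ C|t|⁻¹`.  The constant `C` depends only on `n` and `B`. -/
theorem mixed_kernel_cancellation_z (n : ℕ) (hn : 1 ≤ n) (B : ℝ) :
    ∃ C : ℝ, 0 < C ∧
      ∀ Ω : (Fin n → ℂ) → ℂ,
        ContinuousOn Ω {z : Fin n → ℂ | z ≠ 0} → (∀ z, ‖Ω z‖ ≤ B) →
        (∀ (l : ℝ) (z : Fin n → ℂ), 0 < l → z ≠ 0 → Ω (l • z) = Ω z) →
        (∫ ω : Metric.sphere (0 : EuclideanSpace ℝ (Fin (n + n))) 1,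
            Ω (toC n (ω : EuclideanSpace ℝ (Fin (n + n))))
          ∂((volume : Measure (EuclideanSpace ℝ (Fin (n + n)))).toSphere) = 0) →
        ∀ t : ℝ, t ≠ 0 → ∀ δ : ℝ, 0 < δ →
        ∀ φ : (Fin n → ℂ) → ℂ, ContDiff ℝ 1 φ →
          (∀ z : Fin n → ℂ, ¬ zNorm z ≤ 1 → φ z = 0) →
          (∀ z, ‖φ z‖ ≤ 1) → (∀ z, ‖fderiv ℝ φ z‖ ≤ 1) →
          (∃ L : ℂ,
            Filter.Tendsto
              (fun ε : ℝ => ∫ z in {z : Fin n → ℂ | ε < zNorm z}, mixedK n Ω z t * φ (δ • z))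
              (nhdsWithin (0:ℝ) (Set.Ioi 0)) (nhds L) ∧
            ‖L‖ ≤ C / |t|) ∧
          Integrable ({z : Fin n → ℂ | zNorm z ≤ 1/δ}.indicator
            (fun z => mixedK n Ω z t * (φ (δ • z) - φ 0))) volume ∧
          ‖∫ z : Fin n → ℂ, {z : Fin n → ℂ | zNorm z ≤ 1/δ}.indicator
              (fun z => mixedK n Ω z t * (φ (δ • z) - φ 0)) z‖ ≤ C / |t| := by
  set T : ℝ≥0∞ := (volume : Measure (EuclideanSpace ℝ (Fin (n + n)))).toSphere Set.univ with hT
  refine ⟨|B| * T.toReal + 1, by positivity, ?_⟩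
  intro Ω hΩc hB hhom hmean t ht δ hδ φ hφ hsupp hφ1 hφ'1
  have hB0 : 0 ≤ B := le_trans (norm_nonneg _) (hB 0)
  have hR : (0:ℝ) < 1/δ := by positivity
  have htpos : (0:ℝ) < |t| := abs_pos.2 ht
  set f₀ : (Fin n → ℂ) → ℂ := fun z => mixedK n Ω z t * (φ (δ • z) - φ 0) with hf₀
  set gm : (Fin n → ℂ) → ℂ := {z : Fin n → ℂ | zNorm z ≤ 1/δ}.indicator f₀ with hgm
  have hmsR : MeasurableSet {z : Fin n → ℂ | zNorm z ≤ 1/δ} :=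
    continuous_zNorm.measurable measurableSet_Iic
  have hK_aesm := aesm_mixedK hn hΩc ht
  have hφδ : Continuous fun z : Fin n → ℂ => φ (δ • z) :=
    hφ.continuous.comp (continuous_id.const_smul δ)
  have hf₀_aesm : AEStronglyMeasurable f₀ volume :=
    hK_aesm.mul ((hφδ.sub continuous_const).aestronglyMeasurable)
  have hgm_aesm : AEStronglyMeasurable gm volume := hf₀_aesm.indicator hmsR
  set g₀ : ℝ → ℝ≥0∞ :=
    (Set.Iic (1/δ)).indicator (fun s => ENNReal.ofReal (s * (s ^ (2*n))⁻¹)) with hg₀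
  have hpt : ∀ z, (‖gm z‖₊ : ℝ≥0∞) ≤ ENNReal.ofReal (B * |t|⁻¹ * δ) * g₀ (zNorm z) := by
    intro z
    by_cases hz : zNorm z ≤ 1/δ
    · rw [hgm, Set.indicator_of_mem (by exact hz), hg₀,
        Set.indicator_of_mem (Set.mem_Iic.2 hz),
        ← ENNReal.ofReal_mul (by positivity), ← ENNReal.ofReal_coe_nnreal, coe_nnnorm]
      apply ENNReal.ofReal_le_ofReal
      simp only [hf₀]
      rw [norm_mul]
      have hKb := norm_mixedK_le hB ht z
      have hφb : ‖φ (δ • z) - φ 0‖ ≤ δ * zNorm z := by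
        have h1 := phi_lip hφ hφ'1 (δ • z) 0
        rw [sub_zero] at h1
        refine h1.trans ?_
        refine (norm_le_zNorm _).trans ?_
        rw [zNorm_smul hδ.le]
      calc ‖mixedK n Ω z t‖ * ‖φ (δ • z) - φ 0‖
          ≤ (B * (zNorm z ^ (2*n))⁻¹ * |t|⁻¹) * (δ * zNorm z) :=
            mul_le_mul hKb hφb (norm_nonneg _)
              (mul_nonneg (mul_nonneg hB0 (inv_nonneg.2 (pow_nonneg (zNorm_nonneg z) _)))
                (inv_nonneg.2 (abs_nonneg t)))
        _ = B * |t|⁻¹ * δ * (zNorm z * (zNorm z ^ (2*n))⁻¹) := by ring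
    · rw [hgm, Set.indicator_of_notMem (by exact hz)]
      simp
  have hlint : ∫⁻ z, (‖gm z‖₊ : ℝ≥0∞)
      ≤ ENNReal.ofReal (B * |t|⁻¹ * δ) * (T * ENNReal.ofReal (1/δ)) := by
    calc ∫⁻ z, (‖gm z‖₊ : ℝ≥0∞)
        ≤ ∫⁻ z, ENNReal.ofReal (B * |t|⁻¹ * δ) * g₀ (zNorm z) := lintegral_mono hpt
      _ = ENNReal.ofReal (B * |t|⁻¹ * δ) * ∫⁻ z, g₀ (zNorm z) :=
          lintegral_const_mul' _ _ ENNReal.ofReal_ne_top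
      _ = _ := by rw [hg₀, lintegral_radial hn hR, hT]
  have hfin : ENNReal.ofReal (B * |t|⁻¹ * δ) * (T * ENNReal.ofReal (1/δ)) ≠ ⊤ := by
    haveI : Nontrivial (EuclideanSpace ℝ (Fin (n + n))) := esp_nontrivial hn
    exact ENNReal.mul_ne_top ENNReal.ofReal_ne_top
      (ENNReal.mul_ne_top (measure_ne_top _ _) ENNReal.ofReal_ne_top)
  have hInt : Integrable gm volume := by
    refine ⟨hgm_aesm, ?_⟩
    exact lt_of_le_of_lt hlint (lt_top_iff_ne_top.2 hfin)
  have hnorm_le : ‖∫ z, gm z‖ ≤ (|B| * T.toReal + 1) / |t| := by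
    have h1 : ‖∫ z, gm z‖ ≤ (∫⁻ z, (‖gm z‖₊ : ℝ≥0∞)).toReal := by
      have h := norm_integral_le_lintegral_norm (μ := (volume : Measure (Fin n → ℂ))) gm
      have heq : (∫⁻ z, ENNReal.ofReal ‖gm z‖) = ∫⁻ z, (‖gm z‖₊ : ℝ≥0∞) :=
        lintegral_congr fun z => ofReal_norm (gm z)
      rwa [heq] at h
    have h2 : (∫⁻ z, (‖gm z‖₊ : ℝ≥0∞)).toReal
        ≤ ((ENNReal.ofReal (B * |t|⁻¹ * δ) * (T * ENNReal.ofReal (1/δ)))).toReal :=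
      ENNReal.toReal_mono hfin hlint
    have h3 : ((ENNReal.ofReal (B * |t|⁻¹ * δ) * (T * ENNReal.ofReal (1/δ)))).toReal
        = B * |t|⁻¹ * δ * (T.toReal * (1/δ)) := by
      rw [ENNReal.toReal_mul, ENNReal.toReal_mul, ENNReal.toReal_ofReal (by positivity),
        ENNReal.toReal_ofReal hR.le]
    have h4 : B * |t|⁻¹ * δ * (T.toReal * (1/δ)) = B * T.toReal / |t| := by
      field_simp
    have h5 : B * T.toReal / |t| ≤ (|B| * T.toReal + 1) / |t| := by
      have hbb : B * T.toReal ≤ |B| * T.toReal + 1 := by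
        have hmm := mul_le_mul_of_nonneg_right (le_abs_self B) (ENNReal.toReal_nonneg (a := T))
        linarith
      gcongr
    calc ‖∫ z, gm z‖ ≤ (∫⁻ z, (‖gm z‖₊ : ℝ≥0∞)).toReal := h1
      _ ≤ _ := h2
      _ = _ := h3
      _ = _ := h4
      _ ≤ _ := h5
  have hzero := volume_c_singleton_zero (n := n) hn
  have key_eq : ∀ ε ∈ Set.Ioi (0:ℝ),
      ∫ z in {z : Fin n → ℂ | ε < zNorm z}, mixedK n Ω z t * φ (δ • z)
        = ∫ z, ({z : Fin n → ℂ | ε < zNorm z}.indicator gm) z := by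
    intro ε hε
    have hε0 : (0:ℝ) < ε := hε
    set S := {z : Fin n → ℂ | ε < zNorm z} with hS
    set A := S ∩ {z : Fin n → ℂ | zNorm z ≤ 1/δ} with hA
    have hSm : MeasurableSet S := continuous_zNorm.measurable measurableSet_Ioi
    have hAm : MeasurableSet A := hSm.inter hmsR
    have hAfin : volume A ≠ ⊤ :=
      ne_top_of_le_ne_top (volume_zNorm_le_lt_top hn (1/δ)).ne
        (measure_mono Set.inter_subset_right)
    have hKA : ∀ z ∈ A, ‖mixedK n Ω z t‖ ≤ B * (ε ^ (2*n))⁻¹ * |t|⁻¹ := by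
      intro z hz
      refine (norm_mixedK_le hB ht z).trans ?_
      have h1 : (zNorm z ^ (2*n))⁻¹ ≤ (ε ^ (2*n))⁻¹ :=
        inv_anti₀ (pow_pos hε0 _) (pow_le_pow_left₀ hε0.le (le_of_lt hz.1) _)
      exact mul_le_mul_of_nonneg_right (mul_le_mul_of_nonneg_left h1 hB0)
        (inv_nonneg.2 (abs_nonneg t))
    have hKφ_int : IntegrableOn (fun z => mixedK n Ω z t * φ (δ • z)) A volume := by
      refine Measure.integrableOn_of_bounded (M := B * (ε ^ (2*n))⁻¹ * |t|⁻¹) hAfin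
        (hK_aesm.mul hφδ.aestronglyMeasurable) ?_
      refine (ae_restrict_iff' hAm).2 (Filter.Eventually.of_forall fun z hz => ?_)
      rw [norm_mul]
      calc ‖mixedK n Ω z t‖ * ‖φ (δ • z)‖ ≤ (B * (ε ^ (2*n))⁻¹ * |t|⁻¹) * 1 :=
            mul_le_mul (hKA z hz) (hφ1 _) (norm_nonneg _)
              (mul_nonneg (mul_nonneg hB0 (inv_nonneg.2 (pow_nonneg hε0.le _)))
                (inv_nonneg.2 (abs_nonneg t)))
        _ = B * (ε ^ (2*n))⁻¹ * |t|⁻¹ := mul_one _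
    have hK_int : IntegrableOn (fun z => mixedK n Ω z t) A volume := by
      refine Measure.integrableOn_of_bounded (M := B * (ε ^ (2*n))⁻¹ * |t|⁻¹) hAfin
        hK_aesm ?_
      exact (ae_restrict_iff' hAm).2 (Filter.Eventually.of_forall fun z hz => hKA z hz)
    have step1 : ∫ z in S, mixedK n Ω z t * φ (δ • z)
        = ∫ z in A, mixedK n Ω z t * φ (δ • z) := by
      rw [← integral_indicator hSm, ← integral_indicator hAm]
      congr 1
      funext z
      by_cases hzA : z ∈ A
      · rw [Set.indicator_of_mem hzA, Set.indicator_of_mem hzA.1]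
      · by_cases hzS : z ∈ S
        · have hzR : ¬ zNorm z ≤ 1/δ := fun h => hzA ⟨hzS, h⟩
          have hphi0 : φ (δ • z) = 0 := by
            apply hsupp
            rw [zNorm_smul hδ.le]
            intro hcon
            apply hzR
            rw [le_div_iff₀ hδ]
            linarith [hcon]
          rw [Set.indicator_of_mem hzS, Set.indicator_of_notMem hzA, hphi0, mul_zero]
        · rw [Set.indicator_of_notMem hzS, Set.indicator_of_notMem hzA]
    have hsub_int : IntegrableOn (fun z => mixedK n Ω z t * (φ (δ • z) - φ 0)) A volume := by
      have h := hKφ_int.sub (hK_int.mul_const (φ 0))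
      exact h.congr (Filter.Eventually.of_forall fun z => (mul_sub _ _ _).symm)
    have step2 : ∫ z in A, mixedK n Ω z t * φ (δ • z)
        = (∫ z in A, mixedK n Ω z t * (φ (δ • z) - φ 0))
          + (∫ z in A, mixedK n Ω z t) * φ 0 := by
      calc ∫ z in A, mixedK n Ω z t * φ (δ • z)
          = ∫ z in A, (mixedK n Ω z t * (φ (δ • z) - φ 0) + mixedK n Ω z t * φ 0) :=
            integral_congr_ae (Filter.Eventually.of_forall fun z => by ring)
        _ = (∫ z in A, mixedK n Ω z t * (φ (δ • z) - φ 0))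
            + ∫ z in A, mixedK n Ω z t * φ 0 :=
            integral_add hsub_int (hK_int.mul_const (φ 0))
        _ = _ := by rw [integral_mul_const]
    have step4 : ∫ z in A, mixedK n Ω z t = 0 := by
      rw [← integral_indicator hAm]
      have hrepr : A.indicator (fun z => mixedK n Ω z t)
          = fun z => Ω z * (if ε < zNorm z ∧ zNorm z ≤ 1/δ then
              (((zNorm z ^ (2*n) : ℝ)) : ℂ)⁻¹
                * ((((zNorm z)^2 : ℝ) : ℂ) + (t:ℂ) * Complex.I)⁻¹
              else 0) := by
        funext z
        by_cases hz : z ∈ A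
        · rw [Set.indicator_of_mem hz, if_pos ⟨hz.1, hz.2⟩]
          simp only [mixedK]
          rw [mul_assoc, ← zNorm_sq]
        · rw [Set.indicator_of_notMem hz, if_neg (fun hc => hz ⟨hc.1, hc.2⟩), mul_zero]
      rw [hrepr]
      exact integral_vanish hn Ω hhom hmean
        (fun s => if ε < s ∧ s ≤ 1/δ then
          (((s ^ (2*n) : ℝ)) : ℂ)⁻¹ * (((s^2 : ℝ) : ℂ) + (t:ℂ) * Complex.I)⁻¹ else 0)
    have step5 : ∫ z in A, mixedK n Ω z t * (φ (δ • z) - φ 0)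
        = ∫ z, (S.indicator gm) z := by
      rw [← integral_indicator hAm]
      congr 1
      funext z
      rw [hgm, Set.indicator_indicator]
    calc ∫ z in S, mixedK n Ω z t * φ (δ • z)
        = ∫ z in A, mixedK n Ω z t * φ (δ • z) := step1
      _ = (∫ z in A, mixedK n Ω z t * (φ (δ • z) - φ 0))
          + (∫ z in A, mixedK n Ω z t) * φ 0 := step2
      _ = ∫ z, (S.indicator gm) z := by rw [step4, zero_mul, add_zero, step5]
  have hTend : Filter.Tendsto
      (fun ε : ℝ => ∫ z, ({z : Fin n → ℂ | ε < zNorm z}.indicator gm) z)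
      (nhdsWithin (0:ℝ) (Set.Ioi 0)) (nhds (∫ z, gm z)) := by
    apply tendsto_integral_filter_of_dominated_convergence (bound := fun z => ‖gm z‖)
    · exact Filter.Eventually.of_forall fun ε =>
        hgm_aesm.indicator (continuous_zNorm.measurable measurableSet_Ioi)
    · exact Filter.Eventually.of_forall fun ε =>
        Filter.Eventually.of_forall fun z => norm_indicator_le_norm_self _ _
    · exact hInt.norm
    · have hz0 : ∀ᵐ z : Fin n → ℂ, z ≠ (0 : Fin n → ℂ) := by
        rw [ae_iff]
        convert hzero using 2
        ext z
        simp
      filter_upwards [hz0] with z hz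
      have hpos : 0 < zNorm z := by
        rcases lt_or_eq_of_le (zNorm_nonneg z) with h | h
        · exact h
        · exact absurd (zNorm_eq_zero_iff.1 h.symm) hz
      refine Filter.Tendsto.congr' ?_ tendsto_const_nhds
      filter_upwards [Ioo_mem_nhdsGT_of_mem (Set.left_mem_Ico.2 hpos)] with ε hε
      rw [Set.indicator_of_mem]
      exact hε.2
  refine ⟨⟨∫ z, gm z, ?_, hnorm_le⟩, hInt, hnorm_le⟩
  refine hTend.congr' ?_
  filter_upwards [self_mem_nhdsWithin] with ε hε
  exact (key_eq ε hε).symm
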